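/- arXiv:1810.06872 — 6 statements merged into one kernel-verified Lean document; each statement's English description precedes it below -/
import Mathlib

section
/- For every connected split graph G with no dominating vertex, the domination number, the semitotal domination number, and the total domination number of G are all equal. -/
open SimpleGraph

/-- `D` is a dominating set of `G`. -/
def IsDomSet {V : Type*} [DecidableEq V] (G : SimpleGraph V) (D : Finset V) : Prop :=
  ∀ v, v ∉ D → ∃ u ∈ D, G.Adj u v

/-- `D` is a total dominating set of `G`. -/
def IsTotDomSet {V : Type*} [DecidableEq V] (G : SimpleGraph V) (D : Finset V) : Prop :=
  ∀ v : V, ∃ u ∈ D, G.Adj u v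

/-- `u` and `v` are distinct and within distance at most 2 in `G`. -/
def WithinTwo {V : Type*} (G : SimpleGraph V) (u v : V) : Prop :=
  G.Adj u v ∨ ∃ w, G.Adj u w ∧ G.Adj w v

/-- `D` is a semitotal dominating set of `G`. -/
def IsSemiTDSet {V : Type*} [DecidableEq V] (G : SimpleGraph V) (D : Finset V) : Prop :=
  IsDomSet G D ∧ ∀ v ∈ D, ∃ u ∈ D, u ≠ v ∧ WithinTwo G u v

/-- The domination number of `G`. -/
noncomputable def gamma {V : Type*} [Fintype V] [DecidableEq V] (G : SimpleGraph V) : ℕ :=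
  sInf {n | ∃ D : Finset V, IsDomSet G D ∧ D.card = n}

/-- The total domination number of `G`. -/
noncomputable def gammaT {V : Type*} [Fintype V] [DecidableEq V] (G : SimpleGraph V) : ℕ :=
  sInf {n | ∃ D : Finset V, IsTotDomSet G D ∧ D.card = n}

/-- The semitotal domination number of `G`. -/
noncomputable def gammaT2 {V : Type*} [Fintype V] [DecidableEq V] (G : SimpleGraph V) : ℕ :=
  sInf {n | ∃ D : Finset V, IsSemiTDSet G D ∧ D.card = n}

lemma exists_nbr {V : Type*} [Fintype V] (G : SimpleGraph V) (hconn : G.Connected)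
    (hcard : 2 ≤ Fintype.card V) (v : V) : ∃ u, G.Adj v u := by
  obtain ⟨w, hw⟩ := Fintype.exists_ne_of_one_lt_card (by omega) v
  obtain ⟨p⟩ := hconn.preconnected v w
  cases p with
  | nil => exact absurd rfl (Ne.symm hw)
  | cons h _ => exact ⟨_, h⟩

/-- From a dominating set in a split graph with no dominating vertex,
we can get a total dominating set that is no larger. -/
lemma tot_of_dom {V : Type*} [Fintype V] [DecidableEq V]
    (G : SimpleGraph V) (hconn : G.Connected)
    (hsplit : ∃ C : Set V, G.IsClique C ∧ ∀ a ∈ Cᶜ, ∀ b ∈ Cᶜ, ¬ G.Adj a b)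
    (hcard : 2 ≤ Fintype.card V)
    (hnodom : ¬ ∃ v : V, ∀ u : V, u ≠ v → G.Adj v u)
    (D : Finset V) (hD : IsDomSet G D) :
    ∃ D' : Finset V, IsTotDomSet G D' ∧ D'.card ≤ D.card := by
  classical
  obtain ⟨C, hCcl, hCind⟩ := hsplit
  have hnbr := exists_nbr G hconn hcard
  have hIC : ∀ v, v ∉ C → ∃ u, u ∈ C ∧ G.Adj v u := by
    intro v hv
    obtain ⟨u, hu⟩ := hnbr v
    refine ⟨u, ?_, hu⟩
    by_contra huC
    exact hCind v hv u huC hu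
  let f : V → V := fun v => if h : v ∈ C then v else Classical.choose (hIC v h)
  have hfC : ∀ v, f v ∈ C := by
    intro v
    by_cases h : v ∈ C
    · simp [f, h, h]
    · simpa [f, h] using (Classical.choose_spec (hIC v h)).1
  have hfadj : ∀ v, v ∉ C → G.Adj v (f v) := by
    intro v h
    simpa [f, h] using (Classical.choose_spec (hIC v h)).2
  refine ⟨D.image f, ?_, Finset.card_image_le⟩
  -- D.image f is nonempty
  have hDne : D.Nonempty := by
    by_contra h
    obtain ⟨w⟩ := Fintype.card_pos_iff.mp (by omega : 0 < Fintype.card V)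
    rcases Finset.not_nonempty_iff_eq_empty.mp h with rfl
    obtain ⟨u, hu, -⟩ := hD w (by simp)
    simp at hu
  have hne : (D.image f).Nonempty := hDne.image f
  -- D.image f is a dominating set
  have hdom : IsDomSet G (D.image f) := by
    intro x hx
    by_cases hxC : x ∈ C
    · -- pick any element of the image; it differs from x since x ∉ image
      obtain ⟨u, hu⟩ := hne
      refine ⟨u, hu, ?_⟩
      have hux : u ≠ x := fun h => hx (h ▸ hu)
      have uC : u ∈ C := by
        obtain ⟨a, -, rfl⟩ := Finset.mem_image.mp hu
        exact hfC a
      exact (hCcl uC hxC hux)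
    · by_cases hxD : x ∈ D
      · exact ⟨f x, Finset.mem_image_of_mem f hxD, (hfadj x hxC).symm⟩
      · obtain ⟨u, huD, hadj⟩ := hD x hxD
        have huC : u ∈ C := by
          by_contra huC
          exact hCind u huC x hxC hadj
        have : f u = u := by simp [f, huC]
        exact ⟨u, this ▸ Finset.mem_image_of_mem f huD, hadj⟩
  -- total domination
  intro x
  by_cases hxC : x ∈ C
  · -- need some element of the image different from x
    have : ∃ u ∈ D.image f, u ≠ x := by
      by_contra h
      push_neg at h
      apply hnodom
      refine ⟨x, fun w hw => ?_⟩
      by_cases hwI : w ∈ D.image f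
      · exact absurd (h w hwI) hw
      · obtain ⟨u, hu, hadj⟩ := hdom w hwI
        rcases h u hu with rfl
        exact hadj
    obtain ⟨u, hu, hux⟩ := this
    have huC : u ∈ C := by
      obtain ⟨a, -, rfl⟩ := Finset.mem_image.mp hu
      exact hfC a
    exact ⟨u, hu, hCcl huC hxC hux⟩
  · by_cases hxD : x ∈ D
    · exact ⟨f x, Finset.mem_image_of_mem f hxD, (hfadj x hxC).symm⟩
    · obtain ⟨u, huD, hadj⟩ := hD x hxD
      have huC : u ∈ C := by
        by_contra huC
        exact hCind u huC x hxC hadj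
      have : f u = u := by simp [f, huC]
      exact ⟨u, this ▸ Finset.mem_image_of_mem f huD, hadj⟩

theorem split_graph_domination_equal {V : Type*} [Fintype V] [DecidableEq V]
    (G : SimpleGraph V) (hconn : G.Connected)
    (hsplit : ∃ C : Set V, G.IsClique C ∧ ∀ a ∈ Cᶜ, ∀ b ∈ Cᶜ, ¬ G.Adj a b)
    (hcard : 2 ≤ Fintype.card V)
    (hnodom : ¬ ∃ v : V, ∀ u : V, u ≠ v → G.Adj v u) :
    gamma G = gammaT2 G ∧ gammaT2 G = gammaT G := by
  classical
  have hunivT : IsTotDomSet G (Finset.univ : Finset V) := by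
    intro v
    obtain ⟨u, hu⟩ := exists_nbr G hconn hcard v
    exact ⟨u, Finset.mem_univ u, hu.symm⟩
  have hTne : {n | ∃ D : Finset V, IsTotDomSet G D ∧ D.card = n}.Nonempty :=
    ⟨_, Finset.univ, hunivT, rfl⟩
  -- total implies semitotal
  have hts : ∀ D : Finset V, IsTotDomSet G D → IsSemiTDSet G D := by
    intro D hT
    constructor
    · intro v _
      obtain ⟨u, hu, hadj⟩ := hT v
      exact ⟨u, hu, hadj⟩
    · intro v _
      obtain ⟨u, hu, hadj⟩ := hT v
      exact ⟨u, hu, hadj.ne, Or.inl hadj⟩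
  have hT2ne : {n | ∃ D : Finset V, IsSemiTDSet G D ∧ D.card = n}.Nonempty :=
    ⟨_, Finset.univ, hts _ hunivT, rfl⟩
  have hGne : {n | ∃ D : Finset V, IsDomSet G D ∧ D.card = n}.Nonempty :=
    ⟨_, Finset.univ, (hts _ hunivT).1, rfl⟩
  -- γ ≤ γ_t2
  have h1 : gamma G ≤ gammaT2 G := by
    unfold gamma gammaT2
    obtain ⟨D, hD, hDc⟩ := Nat.sInf_mem hT2ne
    exact hDc ▸ Nat.sInf_le ⟨D, hD.1, rfl⟩
  -- γ_t2 ≤ γ_t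
  have h2 : gammaT2 G ≤ gammaT G := by
    unfold gammaT2 gammaT
    obtain ⟨D, hD, hDc⟩ := Nat.sInf_mem hTne
    exact hDc ▸ Nat.sInf_le ⟨D, hts _ hD, rfl⟩
  -- γ_t ≤ γ
  have h3 : gammaT G ≤ gamma G := by
    unfold gammaT gamma
    obtain ⟨D, hD, hDc⟩ := Nat.sInf_mem hGne
    obtain ⟨D', hD', hle⟩ := tot_of_dom G hconn hsplit hcard hnodom D hD
    calc sInf {n | ∃ D : Finset V, IsTotDomSet G D ∧ D.card = n} ≤ D'.card := Nat.sInf_le ⟨D', hD', rfl⟩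
      _ ≤ D.card := hle
      _ = _ := hDc
  exact ⟨le_antisymm h1 (le_trans h2 h3), le_antisymm h2 (le_trans h3 h1)⟩
end

section
/- Let G be a graph with at least one edge and let Q(G) be the split graph with vertex set V(G) ∪ E(G), clique on V(G), independent set E(G), and each e ∈ E(G) adjacent to its endpoints. If G contains no cycle (not necessarily induced) of length i for some i ≥ 3, then Q(G) contains no induced i-sun S_i. -/
open SimpleGraph

/-- The split graph `Q(G)`. -/
def QGraph {V : Type*} (G : SimpleGraph V) : SimpleGraph (V ⊕ G.edgeSet) :=
  SimpleGraph.fromRel (fun a b =>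
    match a, b with
    | Sum.inl _, Sum.inl _ => True
    | Sum.inl a, Sum.inr e => a ∈ (e : Sym2 V)
    | _, _ => False)

/-- The `n`-sun: vertices `Fin n ⊕ Fin n`, where the left copy `W` is independent, the
right copy `U` is a clique, and `w i` is adjacent to `u j` iff `i = j` or `i ≡ j + 1 (mod n)`. -/
def sunGraph (n : ℕ) : SimpleGraph (Fin n ⊕ Fin n) :=
  SimpleGraph.fromRel (fun a b =>
    match a, b with
    | Sum.inr _, Sum.inr _ => True
    | Sum.inl i, Sum.inr j => i = j ∨ (i : ℕ) = ((j : ℕ) + 1) % n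
    | _, _ => False)

lemma aux_walk {V : Type*} (G : SimpleGraph V) {i : ℕ} (hi : 3 ≤ i) (v : Fin i → V)
    (hadj : ∀ k l (hk : k < i) (hl : l < i), (k + 1) % i = l →
      G.Adj (v ⟨k, hk⟩) (v ⟨l, hl⟩)) :
    ∀ (m k : ℕ) (h : k + m + 1 = i),
      ∃ p : G.Walk (v ⟨k, by omega⟩) (v ⟨0, by omega⟩),
        p.length = m + 1 ∧
        p.support = (List.range (m+2)).map
          (fun j => v ⟨(k+j) % i, Nat.mod_lt _ (by omega)⟩) ∧
        p.edges = (List.range (m+1)).map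
          (fun j => s(v ⟨(k+j) % i, Nat.mod_lt _ (by omega)⟩,
                      v ⟨(k+j+1) % i, Nat.mod_lt _ (by omega)⟩)) := by
  intro m
  induction m with
  | zero =>
    intro k h
    have hk : k < i := by omega
    have hmod : (k + 1) % i = 0 := by
      have : k + 1 = i := by omega
      simp [this]
    have e0 : (k + 0) % i = k := by
      rw [Nat.add_zero]; exact Nat.mod_eq_of_lt hk
    have e1 : (k + 0 + 1) % i = 0 := by rw [Nat.add_zero]; exact hmod
    refine ⟨(hadj k 0 hk (by omega) hmod).toWalk, ?_, ?_, ?_⟩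
    · simp
    · simp only [Adj.toWalk, Walk.support_cons, Walk.support_nil, List.range_succ,
        List.range_zero, List.map_append, List.map_cons, List.map_nil, List.nil_append,
        List.cons_append, e0, hmod]
    · simp only [Adj.toWalk, Walk.edges_cons, Walk.edges_nil, List.range_succ,
        List.range_zero, List.map_append, List.map_cons, List.map_nil, List.nil_append,
        e0, e1]
  | succ m ih =>
    intro k h
    obtain ⟨p, hlen, hsup, hedg⟩ := ih (k + 1) (by omega)
    have hk : k < i := by omega
    have hk1 : (k + 1) % i = k + 1 := Nat.mod_eq_of_lt (by omega)
    have e0 : (k + 0) % i = k := by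
      rw [Nat.add_zero]; exact Nat.mod_eq_of_lt hk
    refine ⟨Walk.cons (hadj k (k+1) hk (by omega) hk1) p, ?_, ?_, ?_⟩
    · simp [hlen]
    · rw [Walk.support_cons, hsup]
      have hr : m + 1 + 2 = m + 2 + 1 := by omega
      conv_rhs => rw [hr, List.range_succ_eq_map, List.map_cons, List.map_map]
      congr 1
      · simp only [e0]
      · apply List.map_congr_left
        intro j hj
        have ej : k + 1 + j = k + (j + 1) := by omega
        simp only [Function.comp_apply, ej, Nat.succ_eq_add_one]
    · rw [Walk.edges_cons, hedg]
      conv_rhs => rw [List.range_succ_eq_map, List.map_cons, List.map_map]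
      congr 1
      · have e1 : (k + 0 + 1) % i = k + 1 := by rw [Nat.add_zero]; exact hk1
        simp only [e0, e1]
      · apply List.map_congr_left
        intro j hj
        have ej : k + 1 + j = k + (j + 1) := by omega
        have ej2 : k + 1 + j + 1 = k + (j + 1) + 1 := by omega
        simp only [Function.comp_apply, ej, ej2, Nat.succ_eq_add_one]

set_option maxHeartbeats 1000000 in
lemma exists_cycle_of_fn {V : Type*} (G : SimpleGraph V) {i : ℕ} (hi : 3 ≤ i) (v : Fin i → V)
    (hinj : Function.Injective v)
    (hadj : ∀ k l (hk : k < i) (hl : l < i), (k + 1) % i = l →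
      G.Adj (v ⟨k, hk⟩) (v ⟨l, hl⟩)) :
    ∃ (a : V) (w : G.Walk a a), w.IsCycle ∧ w.length = i := by
  have hmodinj : ∀ j j', j < i → j' < i → (1 + j) % i = (1 + j') % i → j = j' := by
    intro j j' hj hj' hmod
    rcases Nat.lt_or_ge (1 + j) i with h1 | h1 <;>
      rcases Nat.lt_or_ge (1 + j') i with h2 | h2
    · rw [Nat.mod_eq_of_lt h1, Nat.mod_eq_of_lt h2] at hmod; omega
    · have : 1 + j' = i := by omega
      rw [Nat.mod_eq_of_lt h1, this, Nat.mod_self] at hmod; omega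
    · have : 1 + j = i := by omega
      rw [this, Nat.mod_self, Nat.mod_eq_of_lt h2] at hmod; omega
    · omega
  obtain ⟨p, hlen, hsup, hedg⟩ := aux_walk G hi v hadj (i - 2) 1 (by omega)
  have hlen' : p.length = i - 1 := by omega
  have h12 : i - 2 + 2 = i := by omega
  have h11 : i - 2 + 1 = i - 1 := by omega
  have hpath : p.IsPath := by
    apply SimpleGraph.Walk.IsPath.mk'
    rw [hsup, h12]
    refine List.Nodup.map_on ?_ List.nodup_range
    intro j hj j' hj' hvv
    rw [List.mem_range] at hj hj'
    have := hinj hvv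
    rw [Fin.mk.injEq] at this
    exact hmodinj j j' hj hj' this
  have hadj01 : G.Adj (v ⟨0, by omega⟩) (v ⟨1, by omega⟩) :=
    hadj 0 1 (by omega) (by omega) (Nat.mod_eq_of_lt (by omega))
  have hne : s(v ⟨0, by omega⟩, v ⟨1, by omega⟩) ∉ p.edges := by
    rw [hedg]
    intro hmem
    rw [List.mem_map] at hmem
    obtain ⟨j, hj, heq⟩ := hmem
    rw [List.mem_range] at hj
    have hj1 : (1 + j) % i = 1 + j := Nat.mod_eq_of_lt (by omega)
    rw [Sym2.eq_iff] at heq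
    rcases heq with ⟨h1, h2⟩ | ⟨h1, h2⟩
    · have e1 := hinj h1
      rw [Fin.mk.injEq, hj1] at e1
      omega
    · have e1 := hinj h1
      rw [Fin.mk.injEq, hj1] at e1
      have hj0 : j = 0 := by omega
      subst hj0
      have e2 := hinj h2
      rw [Fin.mk.injEq] at e2
      rw [Nat.mod_eq_of_lt (by omega : 1 + 0 + 1 < i)] at e2
      omega
  refine ⟨v ⟨0, by omega⟩, Walk.cons hadj01 p, ?_, ?_⟩
  · exact (Walk.cons_isCycle_iff p hadj01).mpr ⟨hpath, hne⟩
  · simp [hlen']; omega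

theorem QGraph_sun_free {V : Type*} [Fintype V] [DecidableEq V]
    (G : SimpleGraph V) (hE : G.edgeSet.Nonempty) (i : ℕ) (hi : 3 ≤ i)
    (hcyc : ∀ (a : V) (w : G.Walk a a), w.IsCycle → w.length ≠ i) :
    IsEmpty (sunGraph i ↪g QGraph G) := by
  refine ⟨fun f => ?_⟩
  -- adjacency characterizations
  have sWW : ∀ a b : Fin i, ¬ (sunGraph i).Adj (.inl a) (.inl b) := by
    intro a b; simp [sunGraph]
  have sUU : ∀ a b : Fin i, a ≠ b → (sunGraph i).Adj (.inr a) (.inr b) := by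
    intro a b h; simp [sunGraph, h]
  have sWU : ∀ a b : Fin i, (sunGraph i).Adj (.inl a) (.inr b) ↔
      (a = b ∨ (a : ℕ) = ((b : ℕ) + 1) % i) := by
    intro a b; simp [sunGraph]
  have qVV : ∀ x y : V, x ≠ y → (QGraph G).Adj (.inl x) (.inl y) := by
    intro x y h; simp [QGraph, h]
  have qVE : ∀ (x : V) (e : G.edgeSet),
      (QGraph G).Adj (.inl x) (.inr e) ↔ x ∈ (e : Sym2 V) := by
    intro x e; simp [QGraph]
  have qEE : ∀ e e' : G.edgeSet, ¬ (QGraph G).Adj (.inr e) (.inr e') := by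
    intro e e'; simp [QGraph]
  -- mod fact
  have hne1 : ∀ a : Fin i, ((a : ℕ) + 1) % i ≠ (a : ℕ) := by
    intro a h
    rcases Nat.lt_or_ge ((a : ℕ) + 1) i with h1 | h1
    · rw [Nat.mod_eq_of_lt h1] at h; omega
    · have : (a : ℕ) + 1 = i := by omega
      rw [this, Nat.mod_self] at h; omega
  -- Step 1: every u-vertex maps into the left (vertex) part
  have step1 : ∀ b : Fin i, ∃ x : V, f (.inr b) = .inl x := by
    intro b
    rcases hfb : f (.inr b) with x | e
    · exact ⟨x, rfl⟩
    exfalso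
    set b' : Fin i := ⟨((b : ℕ) + 1) % i, Nat.mod_lt _ (by omega)⟩ with hb'
    have hbb' : b ≠ b' := by
      intro h
      exact hne1 b ((congrArg Fin.val h).symm)
    have adj1 : (sunGraph i).Adj (.inl b) (.inr b) := (sWU b b).mpr (Or.inl rfl)
    have adj2 : (sunGraph i).Adj (.inl b') (.inr b) := (sWU b' b).mpr (Or.inr rfl)
    have hq1 : (QGraph G).Adj (f (.inl b)) (f (.inr b)) := f.map_rel_iff.mpr adj1
    have hq2 : (QGraph G).Adj (f (.inl b')) (f (.inr b)) := f.map_rel_iff.mpr adj2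
    rw [hfb] at hq1 hq2
    rcases hx : f (.inl b) with x | e1
    swap
    · rw [hx] at hq1; exact qEE e1 e hq1
    rcases hy : f (.inl b') with y | e2
    swap
    · rw [hy] at hq2; exact qEE e2 e hq2
    have hxy : x ≠ y := by
      intro h
      apply hbb'
      have : f (.inl b) = f (.inl b') := by rw [hx, hy, h]
      simpa using f.injective this
    have : (sunGraph i).Adj (.inl b) (.inl b') := by
      rw [← f.map_rel_iff, hx, hy]
      exact qVV x y hxy
    exact sWW b b' this
  choose v hv using step1
  have hvinj : Function.Injective v := by
    intro a b h
    have : f (.inr a) = f (.inr b) := by rw [hv a, hv b, h]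
    simpa using f.injective this
  -- Step 2: every w-vertex maps into the right (edge) part
  have step2 : ∀ a : Fin i, ∃ e : G.edgeSet, f (.inl a) = .inr e := by
    intro a
    rcases hfa : f (.inl a) with x | e
    swap
    · exact ⟨e, rfl⟩
    exfalso
    set b : Fin i := ⟨((a : ℕ) + 1) % i, Nat.mod_lt _ (by omega)⟩ with hb
    have h1 : a ≠ b := by
      intro h
      exact hne1 a ((congrArg Fin.val h).symm)
    have h2 : (a : ℕ) ≠ ((b : ℕ) + 1) % i := by
      intro h
      have hb2 : (b : ℕ) = ((a : ℕ) + 1) % i := rfl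
      rw [hb2] at h
      rcases Nat.lt_or_ge ((a : ℕ) + 1) i with hlt | hge
      · rw [Nat.mod_eq_of_lt hlt] at h
        rcases Nat.lt_or_ge ((a : ℕ) + 2) i with hlt2 | hge2
        · rw [Nat.mod_eq_of_lt hlt2] at h; omega
        · have : (a : ℕ) + 2 = i := by omega
          rw [this, Nat.mod_self] at h; omega
      · have : (a : ℕ) + 1 = i := by omega
        rw [this, Nat.mod_self] at h
        rw [Nat.mod_eq_of_lt (by omega)] at h
        omega
    have hnadj : ¬ (sunGraph i).Adj (.inl a) (.inr b) := by
      rw [sWU]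
      push_neg
      exact ⟨fun h => h1 h, h2⟩
    apply hnadj
    rw [← f.map_rel_iff, hfa, hv b]
    apply qVV
    intro h
    have : f (.inl a) = f (.inr b) := by rw [hfa, hv b, h]
    simpa using f.injective this
  choose ed hed using step2
  -- Step 3: adjacency of consecutive v's in G
  have hadj : ∀ k l (hk : k < i) (hl : l < i), (k + 1) % i = l →
      G.Adj (v ⟨k, hk⟩) (v ⟨l, hl⟩) := by
    intro k l hk hl hkl
    set a : Fin i := ⟨k, hk⟩ with ha
    set a' : Fin i := ⟨l, hl⟩ with ha'
    -- w_{a'} is adjacent to u_{a'} and to u_a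
    have adj1 : (sunGraph i).Adj (.inl a') (.inr a') := (sWU a' a').mpr (Or.inl rfl)
    have adj2 : (sunGraph i).Adj (.inl a') (.inr a) := by
      rw [sWU]; right
      show l = (k + 1) % i
      omega
    have m1 : v a' ∈ (ed a' : Sym2 V) := by
      have := f.map_rel_iff.mpr adj1
      rw [hed a', hv a'] at this
      rw [← qVE]
      exact this.symm
    have m2 : v a ∈ (ed a' : Sym2 V) := by
      have := f.map_rel_iff.mpr adj2
      rw [hed a', hv a] at this
      rw [← qVE]
      exact this.symm
    have haa' : v a ≠ v a' := by
      intro h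
      have := hvinj h
      rw [ha, ha', Fin.mk.injEq] at this
      subst this
      exact hne1 a hkl
    have : (ed a' : Sym2 V) = s(v a, v a') :=
      ((Sym2.mem_and_mem_iff haa').mp ⟨m2, m1⟩)
    have hmem : s(v a, v a') ∈ G.edgeSet := this ▸ (ed a').2
    rwa [SimpleGraph.mem_edgeSet] at hmem
  obtain ⟨a, w, hw, hwl⟩ := exists_cycle_of_fn G hi v hvinj hadj
  exact hcyc a w hw hwl
end

section
/- A graph G is dually chordal if and only if there exists a spanning tree T of G such that for every vertex z of G, the closed neighbourhood N_G[z] induces a subtree of T. -/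
open SimpleGraph

private lemma myBallOneEq {V : Type*} (G : SimpleGraph V) (hconn : G.Connected) (z : V) :
    {v : V | v = z ∨ G.Adj z v} = {v : V | G.dist z v ≤ 1} := by
  ext v
  simp only [Set.mem_setOf_eq]
  constructor
  · rintro (rfl | h)
    · simp [SimpleGraph.dist_self]
    · exact le_of_eq (SimpleGraph.dist_eq_one_iff_adj.mpr h)
  · intro h
    interval_cases hd : G.dist z v
    · exact Or.inl (hconn.dist_eq_zero_iff.mp hd).symm
    · exact Or.inr (SimpleGraph.dist_eq_one_iff_adj.mp hd)

private lemma myReachMono {V : Type*} (T : SimpleGraph V) {s s' : Set V} (h : s ≤ s')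
    {a b : V} (ha : a ∈ s) (hb : b ∈ s)
    (hr : (T.induce s).Reachable ⟨a, ha⟩ ⟨b, hb⟩) :
    (T.induce s').Reachable ⟨a, h ha⟩ ⟨b, h hb⟩ :=
  hr.map (T.induceHomOfLE h).toHom

private lemma myDiskConn {V : Type*} (G T : SimpleGraph V) (hconn : G.Connected)
    (hnbr : ∀ z : V, (SimpleGraph.induce {v : V | v = z ∨ G.Adj z v} T).Connected)
    (z : V) (r : ℕ) :
    ∀ u (hu : G.dist z u ≤ r),
      (T.induce {v : V | G.dist z v ≤ r}).Reachable ⟨u, hu⟩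
        ⟨z, by simp [SimpleGraph.dist_self]⟩ := by
  induction r with
  | zero =>
    intro u hu
    have : u = z := (hconn.dist_eq_zero_iff.mp (Nat.le_zero.mp hu)).symm
    subst this
    exact Reachable.refl _
  | succ r ih =>
    have hsub : {v : V | G.dist z v ≤ r} ⊆ {v : V | G.dist z v ≤ r + 1} :=
      fun v hv => le_trans hv (Nat.le_succ r)
    intro u hu
    by_cases h : G.dist z u ≤ r
    · exact myReachMono T hsub h (by simp [SimpleGraph.dist_self]) (ih u h)
    · have hd : G.dist z u = r + 1 := le_antisymm hu (Nat.succ_le_of_lt (Nat.lt_of_not_le h))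
      have hne : u ≠ z := by
        rintro rfl; simp [SimpleGraph.dist_self] at hd
      obtain ⟨p, hp⟩ := hconn.exists_walk_length_eq_dist u z
      have hdsym : G.dist u z = r + 1 := by rwa [SimpleGraph.dist_comm]
      obtain ⟨w, hadj, q, rfl⟩ := SimpleGraph.Walk.exists_eq_cons_of_ne hne p
      have hq : q.length = r := by
        have := hp
        rw [SimpleGraph.Walk.length_cons, hdsym] at this
        omega
      have hw : G.dist z w ≤ r := by
        rw [SimpleGraph.dist_comm]
        exact hq ▸ SimpleGraph.dist_le q
      -- N[w] ⊆ disk (r+1)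
      have hNsub : {v : V | v = w ∨ G.Adj w v} ⊆ {v : V | G.dist z v ≤ r + 1} := by
        rintro x (rfl | hx)
        · exact le_trans hw (Nat.le_succ r)
        · calc G.dist z x ≤ G.dist z w + G.dist w x := hconn.dist_triangle
            _ ≤ r + 1 := add_le_add hw (le_of_eq (SimpleGraph.dist_eq_one_iff_adj.mpr hx))
      have huN : u ∈ {v : V | v = w ∨ G.Adj w v} := Or.inr hadj.symm
      have hwN : w ∈ {v : V | v = w ∨ G.Adj w v} := Or.inl rfl
      have h1 : (T.induce {v : V | v = w ∨ G.Adj w v}).Reachable ⟨u, huN⟩ ⟨w, hwN⟩ :=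
        (hnbr w).preconnected _ _
      have h1' := myReachMono T hNsub huN hwN h1
      have h2' := myReachMono T hsub hw (by simp [SimpleGraph.dist_self]) (ih w hw)
      exact h1'.trans h2'

theorem duallyChordal_iff_compatible_tree {V : Type*} [Fintype V] [DecidableEq V]
    (G : SimpleGraph V) (hconn : G.Connected) :
    (∃ T : SimpleGraph V, T ≤ G ∧ T.IsTree ∧
        ∀ (z : V) (r : ℕ), 1 ≤ r →
          (SimpleGraph.induce {v : V | G.dist z v ≤ r} T).Connected) ↔
    (∃ T : SimpleGraph V, T ≤ G ∧ T.IsTree ∧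
        ∀ z : V, (SimpleGraph.induce {v : V | v = z ∨ G.Adj z v} T).Connected) := by
  constructor
  · rintro ⟨T, hle, htree, hdisk⟩
    refine ⟨T, hle, htree, fun z => ?_⟩
    rw [myBallOneEq G hconn z]
    exact hdisk z 1 le_rfl
  · rintro ⟨T, hle, htree, hnbr⟩
    refine ⟨T, hle, htree, fun z r _ => ?_⟩
    have key := myDiskConn G T hconn hnbr z r
    have hne : Nonempty {v : V | G.dist z v ≤ r} := ⟨⟨z, by simp [SimpleGraph.dist_self]⟩⟩
    refine ⟨fun a b => ?_⟩
    obtain ⟨a, ha⟩ := a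
    obtain ⟨b, hb⟩ := b
    exact (key a ha).trans (key b hb).symm
end

section
/- Let G be a dually chordal graph with compatible tree T, i.e., a spanning tree T of G such that each closed neighbourhood N_G[z] induces a subtree of T. Then for every vertex z and every r ≥ 1, the disk N_G^r[z] induces a subtree of T. -/
open SimpleGraph

/-- Reachability in an induced subgraph is monotone in the vertex set. -/
lemma reach_mono {V : Type*} (T : SimpleGraph V) {s t : Set V} (h : s ⊆ t) {a b : V}
    (ha : a ∈ s) (hb : b ∈ s)
    (hr : (SimpleGraph.induce s T).Reachable ⟨a, ha⟩ ⟨b, hb⟩) :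
    (SimpleGraph.induce t T).Reachable ⟨a, h ha⟩ ⟨b, h hb⟩ := by
  have := hr.map (SimpleGraph.induceHom (SimpleGraph.Hom.id : T →g T)
    (Set.mapsTo_id s |>.mono_right h))
  convert this using 2 <;> rfl

theorem disks_induce_subtrees {V : Type*} [Fintype V] [DecidableEq V]
    (G T : SimpleGraph V) (hconn : G.Connected) (hle : T ≤ G) (htree : T.IsTree)
    (hcompat : ∀ z : V, (SimpleGraph.induce {v : V | v = z ∨ G.Adj z v} T).Connected) :
    ∀ (z : V) (r : ℕ), 1 ≤ r →
      (SimpleGraph.induce {v : V | G.dist z v ≤ r} T).Connected := by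
  intro z r hr
  set s : Set V := {v : V | G.dist z v ≤ r} with hs
  have hz : z ∈ s := by simp [hs, SimpleGraph.dist_self]
  -- key claim: every vertex of the ball is reachable from z inside the induced graph
  have key : ∀ n : ℕ, ∀ v : V, G.dist z v = n → (hv : G.dist z v ≤ r) →
      (SimpleGraph.induce s T).Reachable ⟨z, hz⟩ ⟨v, hv⟩ := by
    intro n
    induction n using Nat.strong_induction_on with
    | _ n ih =>
      intro v hdist hv
      rcases Nat.eq_zero_or_pos n with h0 | hpos
      · subst h0
        have : z = v := (hconn.dist_eq_zero_iff).mp hdist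
        subst this
        exact SimpleGraph.Reachable.refl _
      · -- get a walk of length n from z to v
        obtain ⟨p, hp⟩ := hconn.exists_walk_length_eq_dist z v
        rw [hdist] at hp
        have hlen : p.reverse.length = n := by simp [hp]
        cases hq : p.reverse with
        | nil =>
          exfalso; rw [hq] at hlen; simp at hlen; omega
        | @cons _ w _ hadj q =>
          have hqlen : q.length = n - 1 := by
            rw [hq] at hlen; simp at hlen; omega
          -- distance from z to w is at most n-1
          have hdw : G.dist z w ≤ n - 1 := by
            have := SimpleGraph.dist_le q.reverse
            simpa [hqlen] using this
          have hwlt : G.dist z w < n := lt_of_le_of_lt hdw (by omega)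
          have hws : G.dist z w ≤ r := le_trans (le_trans hdw (by omega)) (hdist ▸ hv)
          -- N[w] ⊆ s
          have hsub : {u : V | u = w ∨ G.Adj w u} ⊆ s := by
            intro u hu
            rcases hu with rfl | hadj'
            · exact hws
            · have h1 : G.dist w u = 1 := SimpleGraph.dist_eq_one_iff_adj.mpr hadj'
              have := hconn.dist_triangle (u := z) (v := w) (w := u)
              have : G.dist z u ≤ G.dist z w + 1 := by omega
              calc G.dist z u ≤ G.dist z w + 1 := this
                _ ≤ (n - 1) + 1 := by omega
                _ ≤ n := by omega
                _ ≤ r := hdist ▸ hv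
          have hwN : w ∈ {u : V | u = w ∨ G.Adj w u} := Or.inl rfl
          have hvN : v ∈ {u : V | u = w ∨ G.Adj w u} := Or.inr hadj.symm
          have hreachN := ((hcompat w).preconnected ⟨w, hwN⟩ ⟨v, hvN⟩)
          have hstep := reach_mono T hsub hwN hvN hreachN
          have hZtoW := ih _ hwlt w rfl hws
          exact hZtoW.trans hstep
  rw [SimpleGraph.connected_iff]
  refine ⟨?_, ⟨⟨z, hz⟩⟩⟩
  · intro a b
    have ra := key _ a.1 rfl a.2
    have rb := key _ b.1 rfl b.2
    exact ra.symm.trans rb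
end

section
/- A graph G satisfies γ_{t2}(H) = γ_t(H) for every induced subgraph H of G with no isolated vertex if and only if G contains no induced cycle C_5 and no induced path P_5. -/
open SimpleGraph

instance : DecidableRel (pathGraph 5).Adj := fun _ _ => decidable_of_iff' _ pathGraph_adj

section AuxEmbed
variable {W : Type*} {H : SimpleGraph W}

lemma noP5 (hP : IsEmpty (pathGraph 5 ↪g H)) {a b c d e : W}
    (hab : H.Adj a b) (hbc : H.Adj b c) (hcd : H.Adj c d) (hde : H.Adj d e)
    (hac : ¬H.Adj a c) (had : ¬H.Adj a d) (hae : ¬H.Adj a e)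
    (hbd : ¬H.Adj b d) (hbe : ¬H.Adj b e) (hce : ¬H.Adj c e) : False := by
  have hca : ¬H.Adj c a := fun h => hac h.symm
  have hda : ¬H.Adj d a := fun h => had h.symm
  have hea : ¬H.Adj e a := fun h => hae h.symm
  have hdb : ¬H.Adj d b := fun h => hbd h.symm
  have heb : ¬H.Adj e b := fun h => hbe h.symm
  have hec : ¬H.Adj e c := fun h => hce h.symm
  have hinj : Function.Injective ![a, b, c, d, e] := by
    have h1 : a ≠ c := fun h => had (h ▸ hcd)
    have h2 : a ≠ d := fun h => hac (h ▸ hcd.symm)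
    have h3 : a ≠ e := fun h => had (h ▸ hde.symm)
    have h4 : b ≠ d := fun h => hbe (h ▸ hde)
    have h5 : b ≠ e := fun h => hbd (h ▸ hde.symm)
    have h6 : c ≠ e := fun h => hbe (h ▸ hbc)
    intro i j hij
    fin_cases i <;> fin_cases j <;>
      simp_all [hab.ne, hbc.ne, hcd.ne, hde.ne] <;> (try rfl) <;> tauto
  exact hP.elim ⟨⟨![a,b,c,d,e], hinj⟩, by
    intro i j
    fin_cases i <;> fin_cases j <;>
      simp only [Matrix.cons_val_zero, Matrix.cons_val_one, Matrix.head_cons,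
        Matrix.cons_val_two, Matrix.cons_val_three, Matrix.cons_val_four,
        Matrix.tail_cons, Matrix.head_fin_const, Matrix.cons_val_succ, Matrix.cons_val_fin_one,
        Fin.isValue] <;>
      first
        | exact iff_of_true (by first
            | exact hab | exact hbc | exact hcd | exact hde
            | exact hab.symm | exact hbc.symm | exact hcd.symm | exact hde.symm) (by decide)
        | exact iff_of_false (by first
            | exact H.irrefl
            | exact hac | exact had | exact hae | exact hbd | exact hbe | exact hce
            | exact hca | exact hda | exact hea | exact hdb | exact heb | exact hec) (by decide)⟩

lemma noC5 (hC : IsEmpty (cycleGraph 5 ↪g H)) {a b c d e : W}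
    (hab : H.Adj a b) (hbc : H.Adj b c) (hcd : H.Adj c d) (hde : H.Adj d e) (hea : H.Adj e a)
    (hac : ¬H.Adj a c) (had : ¬H.Adj a d)
    (hbd : ¬H.Adj b d) (hbe : ¬H.Adj b e) (hce : ¬H.Adj c e) : False := by
  have hca : ¬H.Adj c a := fun h => hac h.symm
  have hda : ¬H.Adj d a := fun h => had h.symm
  have hdb : ¬H.Adj d b := fun h => hbd h.symm
  have heb : ¬H.Adj e b := fun h => hbe h.symm
  have hec : ¬H.Adj e c := fun h => hce h.symm
  have hinj : Function.Injective ![a, b, c, d, e] := by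
    have h1 : a ≠ c := fun h => hce (h ▸ hea.symm)
    have h2 : a ≠ d := fun h => hbd (h ▸ hab.symm)
    have h3 : b ≠ d := fun h => had (h ▸ hab)
    have h4 : b ≠ e := fun h => hbd (h ▸ hde.symm)
    have h5 : c ≠ e := fun h => hbe (h ▸ hbc)
    intro i j hij
    fin_cases i <;> fin_cases j <;>
      simp_all [hab.ne, hbc.ne, hcd.ne, hde.ne, hea.ne] <;> (try rfl) <;> tauto
  exact hC.elim ⟨⟨![a,b,c,d,e], hinj⟩, by
    intro i j
    fin_cases i <;> fin_cases j <;>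
      simp only [Matrix.cons_val_zero, Matrix.cons_val_one, Matrix.head_cons,
        Matrix.cons_val_two, Matrix.cons_val_three, Matrix.cons_val_four,
        Matrix.tail_cons, Matrix.head_fin_const, Matrix.cons_val_succ, Matrix.cons_val_fin_one,
        Fin.isValue] <;>
      first
        | exact iff_of_true (by first
            | exact hab | exact hbc | exact hcd | exact hde | exact hea
            | exact hab.symm | exact hbc.symm | exact hcd.symm | exact hde.symm
            | exact hea.symm) (by decide)
        | exact iff_of_false (by first
            | exact H.irrefl
            | exact hac | exact had | exact hbd | exact hbe | exact hce
            | exact hca | exact hda | exact hdb | exact heb | exact hec) (by decide)⟩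

end AuxEmbed

section Aux
variable {W : Type*} [DecidableEq W] {H : SimpleGraph W}

open scoped Classical in
/-- number of vertices of `D` with no neighbour inside `D`. -/
noncomputable def mu (H : SimpleGraph W) (D : Finset W) : ℕ :=
  (D.filter fun a => ∀ b ∈ D, ¬H.Adj b a).card

/-- F5: in the P4-configuration `x-v-w-u`, every neighbour of `u` other than `v, w`
is adjacent to `v` or to `w`. -/
lemma F5 (hP5 : IsEmpty (pathGraph 5 ↪g H)) (hC5 : IsEmpty (cycleGraph 5 ↪g H))
    {D : Finset W} {v u w x : W} (hv : v ∈ D) (hu : u ∈ D) (huv : u ≠ v)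
    (hwv : H.Adj w v) (hwu : H.Adj w u) (hvx : H.Adj v x)
    (hxpriv : ∀ d ∈ D, d ≠ v → ¬H.Adj d x) (hwx : ¬H.Adj w x)
    (hvunh : ∀ b ∈ D, ¬H.Adj b v) :
    ∀ q, H.Adj q u → q ≠ v → q ≠ w → (H.Adj q v ∨ H.Adj q w) := by
  intro q hqu hqv hqw
  by_contra hcon
  push_neg at hcon
  obtain ⟨hqv', hqw'⟩ := hcon
  have hxu : ¬H.Adj x u := fun h => hxpriv u hu huv h.symm
  have hvu : ¬H.Adj v u := fun h => hvunh u hu h.symm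
  by_cases hqx : H.Adj q x
  · -- C5 : x - v - w - u - q - x
    exact noC5 hC5 hvx.symm hwv.symm hwu hqu.symm hqx
      (fun h => hwx h.symm) hxu hvu (fun h => hqv' h.symm) (fun h => hqw' h.symm)
  · -- P5 : q - u - w - v - x
    exact noP5 hP5 hqu hwu.symm hwv hvx hqw' hqv' hqx
      (fun h => hvu h.symm) (fun h => hxu h.symm) hwx

/-- Swap `v ↦ w` : valid when `w` dominates all external private neighbours of `v`. -/
lemma swap1 (hP5 : IsEmpty (pathGraph 5 ↪g H))
    {D : Finset W} (hD : IsSemiTDSet H D) {v u w : W}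
    (hv : v ∈ D) (hu : u ∈ D) (huv : u ≠ v) (hw : w ∉ D)
    (hwv : H.Adj w v) (hwu : H.Adj w u)
    (hvunh : ∀ b ∈ D, ¬H.Adj b v)
    (hX : ∀ x, H.Adj v x → x ∉ D → (∀ d ∈ D, d ≠ v → ¬H.Adj d x) → H.Adj w x) :
    IsSemiTDSet H (insert w (D.erase v)) ∧ (insert w (D.erase v)).card = D.card ∧
      mu H (insert w (D.erase v)) < mu H D := by
  classical
  set D' : Finset W := insert w (D.erase v) with hD'
  have hwv' : w ≠ v := fun h => hw (h ▸ hv)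
  have hmemD' : ∀ a, a ∈ D' ↔ a = w ∨ (a ∈ D ∧ a ≠ v) := by
    intro a; simp [hD', Finset.mem_insert, Finset.mem_erase, and_comm]
  have huD' : u ∈ D' := (hmemD' u).2 (Or.inr ⟨hu, huv⟩)
  have hwD' : w ∈ D' := Finset.mem_insert_self _ _
  refine ⟨⟨?_, ?_⟩, ?_, ?_⟩
  · -- dominating
    intro z hz
    rw [hmemD'] at hz; push_neg at hz
    obtain ⟨hzw, hzDv⟩ := hz
    by_cases hzv : z = v
    · exact ⟨w, hwD', hzv ▸ hwv⟩
    · have hzD : z ∉ D := fun h => hzv (hzDv h)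
      by_cases hall : ∀ d ∈ D, d ≠ v → ¬H.Adj d z
      · obtain ⟨d, hd, hdz⟩ := hD.1 z hzD
        have hdv : d = v := by
          by_contra hne; exact hall d hd hne hdz
        exact ⟨w, hwD', hX z (hdv ▸ hdz) hzD hall⟩
      · push_neg at hall
        obtain ⟨d, hd, hdv, hdz⟩ := hall
        exact ⟨d, (hmemD' d).2 (Or.inr ⟨hd, hdv⟩), hdz⟩
  · -- semitotal
    intro a ha
    rcases (hmemD' a).1 ha with rfl | ⟨haD, hav⟩
    · exact ⟨u, huD', fun h => hw (h ▸ hu), Or.inl hwu.symm⟩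
    · obtain ⟨p, hp, hpa, hp2⟩ := hD.2 a haD
      by_cases hpv : p = v
      · subst hpv
        rcases hp2 with hpa' | ⟨y, hpy, hya⟩
        · exact absurd hpa'.symm (hvunh a haD)
        · have hyD : y ∉ D := fun h => hvunh y h hpy.symm
          have hwa' : w ≠ a := fun h => hw (h ▸ haD)
          by_cases hyw : y = w
          · exact ⟨w, hwD', hwa', Or.inl (hyw ▸ hya)⟩
          by_cases haw : H.Adj w a
          · exact ⟨w, hwD', hwa', Or.inl haw⟩
          by_cases hA : H.Adj y w
          · exact ⟨w, hwD', hwa', Or.inr ⟨y, hA.symm, hya⟩⟩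
          by_cases hau : a = u
          · exact ⟨w, hwD', hwa', Or.inl (hau ▸ hwu)⟩
          by_cases hyu : H.Adj y u
          · exact ⟨u, huD', fun h => hau h.symm, Or.inr ⟨y, hyu.symm, hya⟩⟩
          by_cases hadu : H.Adj a u
          · exact ⟨u, huD', fun h => hau h.symm, Or.inl hadu.symm⟩
          -- P5 : a - y - v - w - u
          exact (noP5 hP5 hya.symm hpy.symm hwv.symm hwu
            (hvunh a haD) (fun h => haw h.symm) hadu hA hyu (fun h => hvunh u hu h.symm)).elim
      · exact ⟨p, (hmemD' p).2 (Or.inr ⟨hp, hpv⟩), hpa, hp2⟩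
  · -- cardinality
    have hwe : w ∉ D.erase v := fun h => hw (Finset.mem_of_mem_erase h)
    rw [Finset.card_insert_of_notMem hwe, Finset.card_erase_of_mem hv]
    exact Nat.succ_pred_eq_of_pos (Finset.card_pos.2 ⟨v, hv⟩)
  · -- mu decreases
    have hvmem : v ∈ D.filter fun a => ∀ b ∈ D, ¬H.Adj b a := Finset.mem_filter.2 ⟨hv, hvunh⟩
    unfold mu
    refine lt_of_le_of_lt (Finset.card_le_card ?_) (Finset.card_erase_lt_of_mem hvmem)
    intro a ha
    rw [Finset.mem_filter] at ha
    obtain ⟨haD', hunh'⟩ := ha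
    have haw : a ≠ w := by
      rintro rfl
      exact hunh' u huD' hwu.symm
    rcases (hmemD' a).1 haD' with rfl | ⟨haD, hav⟩
    · exact absurd rfl haw
    · refine Finset.mem_erase.2 ⟨hav, Finset.mem_filter.2 ⟨haD, ?_⟩⟩
      intro b hb hba
      by_cases hbv : b = v
      · exact hvunh a haD (hbv ▸ hba).symm
      · exact hunh' b ((hmemD' b).2 (Or.inr ⟨hb, hbv⟩)) hba

/-- Swap `u ↦ w` : valid in the P4-configuration `x-v-w-u`. -/
lemma swap2 (hP5 : IsEmpty (pathGraph 5 ↪g H)) (hC5 : IsEmpty (cycleGraph 5 ↪g H))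
    {D : Finset W} (hD : IsSemiTDSet H D) {v u w x : W}
    (hv : v ∈ D) (hu : u ∈ D) (huv : u ≠ v) (hw : w ∉ D) (hxD : x ∉ D)
    (hwv : H.Adj w v) (hwu : H.Adj w u) (hvx : H.Adj v x)
    (hxpriv : ∀ d ∈ D, d ≠ v → ¬H.Adj d x) (hwx : ¬H.Adj w x)
    (hvunh : ∀ b ∈ D, ¬H.Adj b v) :
    IsSemiTDSet H (insert w (D.erase u)) ∧ (insert w (D.erase u)).card = D.card ∧
      mu H (insert w (D.erase u)) < mu H D := by
  classical
  have f5 := F5 hP5 hC5 hv hu huv hwv hwu hvx hxpriv hwx hvunh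
  set D' : Finset W := insert w (D.erase u) with hD'
  have hwv' : w ≠ v := fun h => hw (h ▸ hv)
  have hmemD' : ∀ a, a ∈ D' ↔ a = w ∨ (a ∈ D ∧ a ≠ u) := by
    intro a; simp [hD', Finset.mem_insert, Finset.mem_erase, and_comm]
  have hvD' : v ∈ D' := (hmemD' v).2 (Or.inr ⟨hv, fun h => huv h.symm⟩)
  have hwD' : w ∈ D' := Finset.mem_insert_self _ _
  refine ⟨⟨?_, ?_⟩, ?_, ?_⟩
  · -- dominating
    intro z hz
    rw [hmemD'] at hz; push_neg at hz
    obtain ⟨hzw, hzDu⟩ := hz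
    by_cases hzu : z = u
    · exact ⟨w, hwD', hzu ▸ hwu⟩
    · have hzD : z ∉ D := fun h => hzu (hzDu h)
      have hzv : z ≠ v := fun h => (h ▸ hzD) hv
      obtain ⟨d, hd, hdz⟩ := hD.1 z hzD
      by_cases hdu : d = u
      · rcases f5 z (hdu ▸ hdz).symm hzv hzw with h | h
        · exact ⟨v, hvD', h.symm⟩
        · exact ⟨w, hwD', h.symm⟩
      · exact ⟨d, (hmemD' d).2 (Or.inr ⟨hd, hdu⟩), hdz⟩
  · -- semitotal
    intro a ha
    rcases (hmemD' a).1 ha with rfl | ⟨haD, hau⟩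
    · exact ⟨v, hvD', hwv'.symm, Or.inl hwv.symm⟩
    · have hwa : w ≠ a := fun h => hw (h ▸ haD)
      by_cases hav : a = v
      · exact ⟨w, hwD', hwa, Or.inl (hav ▸ hwv)⟩
      obtain ⟨p, hp, hpa, hp2⟩ := hD.2 a haD
      by_cases hpu : p = u
      · subst hpu
        rcases hp2 with hpa' | ⟨y, hpy, hya⟩
        · rcases f5 a hpa'.symm hav (fun h => hwa h.symm) with h | h
          · exact absurd h (hvunh a haD)
          · exact ⟨w, hwD', hwa, Or.inl h.symm⟩
        · by_cases hyD : y ∈ D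
          · exact ⟨y, (hmemD' y).2 (Or.inr ⟨hyD, fun h => H.irrefl (h ▸ hpy)⟩),
              fun h => H.irrefl (h ▸ hya), Or.inl hya⟩
          · have hyv : y ≠ v := fun h => hvunh p hp (h ▸ hpy)
            by_cases hyw : y = w
            · exact ⟨w, hwD', hwa, Or.inl (hyw ▸ hya)⟩
            · rcases f5 y hpy.symm hyv hyw with h | h
              · exact ⟨v, hvD', fun h' => hav h'.symm, Or.inr ⟨y, h.symm, hya⟩⟩
              · exact ⟨w, hwD', hwa, Or.inr ⟨y, h.symm, hya⟩⟩
      · exact ⟨p, (hmemD' p).2 (Or.inr ⟨hp, hpu⟩), hpa, hp2⟩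
  · -- cardinality
    have hwe : w ∉ D.erase u := fun h => hw (Finset.mem_of_mem_erase h)
    rw [Finset.card_insert_of_notMem hwe, Finset.card_erase_of_mem hu]
    exact Nat.succ_pred_eq_of_pos (Finset.card_pos.2 ⟨u, hu⟩)
  · -- mu decreases
    have hvmem : v ∈ D.filter fun a => ∀ b ∈ D, ¬H.Adj b a := Finset.mem_filter.2 ⟨hv, hvunh⟩
    unfold mu
    refine lt_of_le_of_lt (Finset.card_le_card ?_) (Finset.card_erase_lt_of_mem hvmem)
    intro a ha
    rw [Finset.mem_filter] at ha
    obtain ⟨haD', hunh'⟩ := ha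
    have haw : a ≠ w := by
      rintro rfl
      exact hunh' v hvD' hwv.symm
    have hvwa : ¬H.Adj w a := hunh' w hwD'
    rcases (hmemD' a).1 haD' with rfl | ⟨haD, hau⟩
    · exact absurd rfl haw
    · have hav : a ≠ v := by
        rintro rfl
        exact hunh' w hwD' hwv
      refine Finset.mem_erase.2 ⟨hav, Finset.mem_filter.2 ⟨haD, ?_⟩⟩
      intro b hb hba
      by_cases hbu : b = u
      · rcases f5 a (hbu ▸ hba).symm hav haw with h | h
        · exact hvunh a haD h
        · exact hvwa h.symm
      · exact hunh' b ((hmemD' b).2 (Or.inr ⟨hb, hbu⟩)) hba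




lemma mu_zero_tot {D : Finset W} (hD : IsSemiTDSet H D) (h0 : mu H D = 0) :
    IsTotDomSet H D := by
  classical
  intro z
  by_cases hz : z ∈ D
  · by_contra hno
    push_neg at hno
    unfold mu at h0
    rw [Finset.card_eq_zero, Finset.eq_empty_iff_forall_notMem] at h0
    exact h0 z (Finset.mem_filter.2 ⟨hz, hno⟩)
  · exact hD.1 z hz

lemma exists_tot (hP5 : IsEmpty (pathGraph 5 ↪g H)) (hC5 : IsEmpty (cycleGraph 5 ↪g H)) :
    ∀ (n : ℕ) (D : Finset W), mu H D ≤ n → IsSemiTDSet H D →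
      ∃ T : Finset W, IsTotDomSet H T ∧ T.card = D.card := by
  classical
  intro n
  induction n with
  | zero =>
    intro D h0 hD
    exact ⟨D, mu_zero_tot hD (Nat.le_zero.mp h0), rfl⟩
  | succ n ih =>
    intro D hle hD
    by_cases h0 : mu H D = 0
    · exact ⟨D, mu_zero_tot hD h0, rfl⟩
    · have hpos : 0 < mu H D := Nat.pos_of_ne_zero h0
      unfold mu at hpos
      obtain ⟨v, hvf⟩ := Finset.card_pos.mp hpos
      rw [Finset.mem_filter] at hvf
      obtain ⟨hv, hvunh⟩ := hvf
      obtain ⟨u, hu, huv, h2⟩ := hD.2 v hv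
      rcases h2 with h | ⟨w, huw, hwv⟩
      · exact absurd h (hvunh u hu)
      · have hw : w ∉ D := fun hmem => hvunh w hmem hwv
        have hwu : H.Adj w u := huw.symm
        by_cases hX : ∀ x, H.Adj v x → x ∉ D → (∀ d ∈ D, d ≠ v → ¬H.Adj d x) → H.Adj w x
        · obtain ⟨hsemi, hcard, hmu⟩ := swap1 hP5 hD hv hu huv hw hwv hwu hvunh hX
          obtain ⟨T, hT, hTc⟩ := ih _ (by omega) hsemi
          exact ⟨T, hT, by omega⟩
        · push_neg at hX
          obtain ⟨x, hvx, hxD, hxpriv, hwx⟩ := hX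
          obtain ⟨hsemi, hcard, hmu⟩ :=
            swap2 hP5 hC5 hD hv hu huv hw hxD hwv hwu hvx hxpriv hwx hvunh
          obtain ⟨T, hT, hTc⟩ := ih _ (by omega) hsemi
          exact ⟨T, hT, by omega⟩

theorem semi_eq_tot [Fintype W] (hP5 : IsEmpty (pathGraph 5 ↪g H))
    (hC5 : IsEmpty (cycleGraph 5 ↪g H)) (hiso : ∀ v : W, ∃ u, H.Adj v u) :
    gammaT2 H = gammaT H := by
  unfold gammaT gammaT2
  have hTuniv : IsTotDomSet H Finset.univ :=
    fun v => (hiso v).elim fun u hu => ⟨u, Finset.mem_univ u, hu.symm⟩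
  have hSuniv : IsSemiTDSet H Finset.univ := by
    refine ⟨fun v hv => absurd (Finset.mem_univ v) hv, fun v _ => ?_⟩
    obtain ⟨u, hu⟩ := hiso v
    exact ⟨u, Finset.mem_univ u, hu.ne', Or.inl hu.symm⟩
  apply le_antisymm
  · obtain ⟨D, hD, hDc⟩ :=
      Nat.sInf_mem (s := {n | ∃ D : Finset W, IsTotDomSet H D ∧ D.card = n})
        ⟨_, Finset.univ, hTuniv, rfl⟩
    have hsemi : IsSemiTDSet H D := by
      refine ⟨fun z _ => hD z, fun z _ => ?_⟩
      obtain ⟨p, hp, hpa⟩ := hD z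
      exact ⟨p, hp, hpa.ne, Or.inl hpa⟩
    exact Nat.sInf_le ⟨D, hsemi, hDc⟩
  · obtain ⟨D, hD, hDc⟩ :=
      Nat.sInf_mem (s := {n | ∃ D : Finset W, IsSemiTDSet H D ∧ D.card = n})
        ⟨_, Finset.univ, hSuniv, rfl⟩
    obtain ⟨T, hT, hTc⟩ := exists_tot hP5 hC5 (mu H D) D le_rfl hD
    exact Nat.sInf_le ⟨T, hT, by rw [hTc, hDc]⟩

end Aux

section Transfer
variable {A B : Type*} [DecidableEq A] [DecidableEq B]
  {Ga : SimpleGraph A} {Gb : SimpleGraph B}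

lemma isTot_map (e : Ga ≃g Gb) {D : Finset A} (h : IsTotDomSet Ga D) :
    IsTotDomSet Gb (D.map e.toEquiv.toEmbedding) := by
  intro v
  obtain ⟨u, hu, ha⟩ := h (e.symm v)
  refine ⟨e u, Finset.mem_map_of_mem _ hu, ?_⟩
  have h2 := e.map_adj_iff.mpr ha
  rwa [RelIso.apply_symm_apply] at h2

lemma isSemi_map (e : Ga ≃g Gb) {D : Finset A} (h : IsSemiTDSet Ga D) :
    IsSemiTDSet Gb (D.map e.toEquiv.toEmbedding) := by
  constructor
  · intro v hv
    have hv' : e.symm v ∉ D := by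
      intro hc
      apply hv
      have h3 : e (e.symm v) ∈ D.map e.toEquiv.toEmbedding := Finset.mem_map_of_mem _ hc
      rwa [RelIso.apply_symm_apply] at h3
    obtain ⟨u, hu, ha⟩ := h.1 _ hv'
    refine ⟨e u, Finset.mem_map_of_mem _ hu, ?_⟩
    have h2 := e.map_adj_iff.mpr ha
    rwa [RelIso.apply_symm_apply] at h2
  · intro v hv
    rw [Finset.mem_map] at hv
    obtain ⟨a, ha, rfl⟩ := hv
    obtain ⟨p, hp, hpa, h2⟩ := h.2 a ha
    refine ⟨e p, Finset.mem_map_of_mem _ hp, fun hc => hpa (e.injective hc), ?_⟩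
    rcases h2 with h' | ⟨m, h1, h2'⟩
    · exact Or.inl (e.map_adj_iff.mpr h')
    · exact Or.inr ⟨e m, e.map_adj_iff.mpr h1, e.map_adj_iff.mpr h2'⟩

lemma gammaT_congr [Fintype A] [Fintype B] (e : Ga ≃g Gb) : gammaT Ga = gammaT Gb := by
  unfold gammaT
  congr 1
  ext n
  constructor
  · rintro ⟨D, hD, rfl⟩
    exact ⟨D.map _, isTot_map e hD, Finset.card_map _⟩
  · rintro ⟨D, hD, rfl⟩
    exact ⟨D.map _, isTot_map e.symm hD, Finset.card_map _⟩

lemma gammaT2_congr [Fintype A] [Fintype B] (e : Ga ≃g Gb) : gammaT2 Ga = gammaT2 Gb := by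
  unfold gammaT2
  congr 1
  ext n
  constructor
  · rintro ⟨D, hD, rfl⟩
    exact ⟨D.map _, isSemi_map e hD, Finset.card_map _⟩
  · rintro ⟨D, hD, rfl⟩
    exact ⟨D.map _, isSemi_map e.symm hD, Finset.card_map _⟩

end Transfer

lemma cyc_ne : gammaT2 (cycleGraph 5) ≠ gammaT (cycleGraph 5) := by
  have h2 : gammaT2 (cycleGraph 5) ≤ 2 := by
    apply Nat.sInf_le
    refine ⟨{0, 2}, ?_, by decide⟩
    unfold IsSemiTDSet IsDomSet WithinTwo
    decide
  have h3 : 3 ≤ gammaT (cycleGraph 5) := by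
    apply le_csInf
    · exact ⟨5, Finset.univ, by unfold IsTotDomSet; decide, by decide⟩
    · rintro n ⟨D, hD, rfl⟩
      revert hD
      revert D
      unfold IsTotDomSet
      decide
  omega

lemma path_ne : gammaT2 (pathGraph 5) ≠ gammaT (pathGraph 5) := by
  have h2 : gammaT2 (pathGraph 5) ≤ 2 := by
    apply Nat.sInf_le
    refine ⟨{1, 3}, ?_, by decide⟩
    unfold IsSemiTDSet IsDomSet WithinTwo
    decide
  have h3 : 3 ≤ gammaT (pathGraph 5) := by
    apply le_csInf
    · exact ⟨5, Finset.univ, by unfold IsTotDomSet; decide, by decide⟩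
    · rintro n ⟨D, hD, rfl⟩
      revert hD
      revert D
      unfold IsTotDomSet
      decide
  omega

lemma forb {V : Type*} [Fintype V] [DecidableEq V] {G : SimpleGraph V} {K : SimpleGraph (Fin 5)}
    (f : K ↪g G)
    (hyp : ∀ S : Finset V,
        (∀ v : (S : Set V), ∃ u, (SimpleGraph.induce (S : Set V) G).Adj v u) →
        gammaT2 (SimpleGraph.induce (S : Set V) G) =
          gammaT (SimpleGraph.induce (S : Set V) G))
    (hne : gammaT2 K ≠ gammaT K) (hisol : ∀ v : Fin 5, ∃ u, K.Adj v u) : False := by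
  classical
  set S : Finset V := Finset.univ.map f.toEmbedding with hS
  have hmem : ∀ i : Fin 5, f i ∈ (S : Set V) := fun i => by simp [hS]
  have hbij : Function.Bijective (fun i : Fin 5 => (⟨f i, hmem i⟩ : (S : Set V))) := by
    constructor
    · intro i j hij
      exact f.injective (congrArg Subtype.val hij)
    · rintro ⟨y, hy⟩
      simp only [hS, Finset.coe_map, Finset.coe_univ, Set.image_univ, Set.mem_range] at hy
      obtain ⟨i, hi⟩ := hy
      exact ⟨i, Subtype.ext hi⟩
  let e : K ≃g SimpleGraph.induce (S : Set V) G :=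
    { toEquiv := Equiv.ofBijective _ hbij,
      map_rel_iff' := by
        intro i j
        exact f.map_adj_iff }
  have hpre : ∀ v : (S : Set V), ∃ u, (SimpleGraph.induce (S : Set V) G).Adj v u := by
    intro v
    obtain ⟨u, hu⟩ := hisol (e.symm v)
    refine ⟨e u, ?_⟩
    have h2 := e.map_adj_iff.mpr hu
    rwa [RelIso.apply_symm_apply] at h2
  have hEq := hyp S hpre
  rw [← gammaT2_congr e, ← gammaT_congr e] at hEq
  exact hne hEq

theorem semitotal_eq_total_hereditary_iff {V : Type*} [Fintype V] [DecidableEq V]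
    (G : SimpleGraph V) :
    (∀ S : Finset V,
        (∀ v : (S : Set V), ∃ u, (SimpleGraph.induce (S : Set V) G).Adj v u) →
        gammaT2 (SimpleGraph.induce (S : Set V) G) =
          gammaT (SimpleGraph.induce (S : Set V) G)) ↔
    (IsEmpty (cycleGraph 5 ↪g G) ∧ IsEmpty (pathGraph 5 ↪g G)) := by
  constructor
  · intro hyp
    constructor
    · exact ⟨fun f => forb f hyp cyc_ne (by decide)⟩
    · exact ⟨fun f => forb f hyp path_ne (by decide)⟩
  · rintro ⟨hC5, hP5⟩ S hisoS
    have hP5' : IsEmpty (pathGraph 5 ↪g SimpleGraph.induce (S : Set V) G) :=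
      ⟨fun f => hP5.false ((Embedding.induce (S : Set V)).comp f)⟩
    have hC5' : IsEmpty (cycleGraph 5 ↪g SimpleGraph.induce (S : Set V) G) :=
      ⟨fun f => hC5.false ((Embedding.induce (S : Set V)).comp f)⟩
    exact semi_eq_tot hP5' hC5' hisoS
end

section
/- Let G be a (C_5, P_5)-free graph and H an induced subgraph of G with no isolated vertex. Then every minimum semitotal dominating set of H can be modified, without increasing its size, into a total dominating set of H; in particular γ_t(H) ≤ γ_{t2}(H). -/
open SimpleGraph

def Freeish {W : Type*} (H : SimpleGraph W) : Prop := ∀ a b c d e : W,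
  H.Adj a b → H.Adj b c → H.Adj c d → H.Adj d e →
  ¬H.Adj a c → ¬H.Adj a d → ¬H.Adj b d → ¬H.Adj b e → ¬H.Adj c e → False

lemma freeish_of_isEmpty {W : Type*} (H : SimpleGraph W)
    (hC5 : IsEmpty (cycleGraph 5 ↪g H)) (hP5 : IsEmpty (pathGraph 5 ↪g H)) :
    Freeish H := by
  intro a b c d e hab hbc hcd hde hac had hbd hbe hce
  have nac : a ≠ c := by rintro rfl; exact had hcd
  have nad : a ≠ d := by rintro rfl; exact hbd hab.symm
  have nae : a ≠ e := by rintro rfl; exact had hde.symm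
  have nbd : b ≠ d := by rintro rfl; exact hbe hde
  have nbe : b ≠ e := by rintro rfl; exact hbd hde.symm
  have nce : c ≠ e := by rintro rfl; exact hbe hbc
  set f : Fin 5 → W := ![a, b, c, d, e] with hf
  have hinj : Function.Injective f := by
    intro i j hij
    fin_cases i <;> fin_cases j <;> simp_all [hf] <;>
      first
        | rfl
        | (exact absurd hij (by first
            | assumption
            | exact hab.ne | exact hbc.ne | exact hcd.ne | exact hde.ne
            | exact hab.ne' | exact hbc.ne' | exact hcd.ne' | exact hde.ne'
            | exact fun h => nac h.symm | exact fun h => nad h.symm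
            | exact fun h => nae h.symm | exact fun h => nbd h.symm
            | exact fun h => nbe h.symm | exact fun h => nce h.symm))
  by_cases hae : H.Adj a e
  · exact hC5.elim ⟨⟨f, hinj⟩, by
      intro i j
      fin_cases i <;> fin_cases j <;> simp [hf, cycleGraph_adj] <;> first
        | exact iff_of_true (by first
            | assumption | exact hab.symm | exact hbc.symm | exact hcd.symm
            | exact hde.symm | exact hae.symm) (by decide)
        | exact iff_of_false (by first
            | exact H.loopless _ | assumption
            | exact fun h => hac h.symm | exact fun h => had h.symm
            | exact fun h => hbd h.symm | exact fun h => hbe h.symm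
            | exact fun h => hce h.symm) (by decide)
        | (first
            | assumption | exact hab.symm | exact hbc.symm | exact hcd.symm
            | exact hde.symm | exact hae.symm
            | exact H.loopless _
            | exact fun h => hac h.symm | exact fun h => had h.symm
            | exact fun h => hbd h.symm | exact fun h => hbe h.symm
            | exact fun h => hce h.symm)⟩
  · exact hP5.elim ⟨⟨f, hinj⟩, by
      intro i j
      fin_cases i <;> fin_cases j <;> simp [hf, pathGraph_adj] <;> first
        | exact iff_of_true (by first
            | assumption | exact hab.symm | exact hbc.symm | exact hcd.symm
            | exact hde.symm) (by decide)
        | exact iff_of_false (by first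
            | exact H.loopless _ | assumption
            | exact fun h => hac h.symm | exact fun h => had h.symm | exact fun h => hae h.symm
            | exact fun h => hbd h.symm | exact fun h => hbe h.symm
            | exact fun h => hce h.symm) (by decide)
        | (first
            | assumption | exact hab.symm | exact hbc.symm | exact hcd.symm
            | exact hde.symm
            | exact H.loopless _
            | exact fun h => hac h.symm | exact fun h => had h.symm | exact fun h => hae h.symm
            | exact fun h => hbd h.symm | exact fun h => hbe h.symm
            | exact fun h => hce h.symm)⟩


noncomputable def Lset {W : Type*} [DecidableEq W] (H : SimpleGraph W) (D : Finset W) :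
    Finset W :=
  @Finset.filter _ (fun d => ∀ e ∈ D, ¬ H.Adj e d) (Classical.decPred _) D

lemma mem_Lset {W : Type*} [DecidableEq W] {H : SimpleGraph W} {D : Finset W} {d : W} :
    d ∈ Lset H D ↔ d ∈ D ∧ ∀ e ∈ D, ¬H.Adj e d :=
  @Finset.mem_filter _ _ (Classical.decPred _) _ _

lemma step {W : Type*} [DecidableEq W] {H : SimpleGraph W} (hfree : Freeish H)
    {D : Finset W} (hD : IsSemiTDSet H D) {v : W} (hv : v ∈ Lset H D) :
    ∃ D' : Finset W, IsSemiTDSet H D' ∧ D'.card ≤ D.card ∧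
      Lset H D' ⊆ (Lset H D).erase v := by
  obtain ⟨hvD, hlon⟩ := mem_Lset.mp hv
  obtain ⟨u, hu, huv, hw2⟩ := hD.2 v hvD
  have hnadj : ¬H.Adj u v := hlon u hu
  rcases hw2 with h | ⟨w, huw, hwv⟩
  · exact absurd h hnadj
  have hwD : w ∉ D := fun hw => hlon w hw hwv
  have hDpos : 0 < D.card := Finset.card_pos.mpr ⟨v, hvD⟩
  by_cases hA : ∀ x, x ∉ D → H.Adj v x → (∀ e ∈ D, H.Adj e x → e = v) → (x = w ∨ H.Adj w x)
  · -- replace v by w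
    refine ⟨insert w (D.erase v), ⟨?_, ?_⟩, ?_, ?_⟩
    · -- dominating
      intro x hx
      have hxw : x ≠ w := by rintro rfl; exact hx (Finset.mem_insert_self x _)
      by_cases hxv : x = v
      · subst hxv
        exact ⟨w, Finset.mem_insert_self _ _, hwv⟩
      · have hxD : x ∉ D := fun h =>
          hx (Finset.mem_insert_of_mem (Finset.mem_erase.mpr ⟨hxv, h⟩))
        by_cases hpriv : ∀ e ∈ D, H.Adj e x → e = v
        · obtain ⟨e, he, hex⟩ := hD.1 x hxD
          have hev : e = v := hpriv e he hex
          subst hev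
          rcases hA x hxD hex hpriv with h | h
          · exact absurd h hxw
          · exact ⟨w, Finset.mem_insert_self _ _, h⟩
        · push_neg at hpriv
          obtain ⟨e, he, hex, hev⟩ := hpriv
          exact ⟨e, Finset.mem_insert_of_mem (Finset.mem_erase.mpr ⟨hev, he⟩), hex⟩
    · -- semitotal condition
      intro d hd
      have huD' : u ∈ insert w (D.erase v) :=
        Finset.mem_insert_of_mem (Finset.mem_erase.mpr ⟨huv, hu⟩)
      rcases Finset.mem_insert.mp hd with rfl | hd'
      · exact ⟨u, huD', fun h => hwD (h ▸ hu), Or.inl huw⟩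
      · obtain ⟨hdv, hdD⟩ := Finset.mem_erase.mp hd'
        obtain ⟨u', hu', hu'd, h2⟩ := hD.2 d hdD
        by_cases hu'v : u' = v
        · rw [hu'v] at h2
          rcases h2 with h | ⟨y, hvy, hyd⟩
          · exact absurd h.symm (hlon d hdD)
          · by_cases h1 : H.Adj w d
            · exact ⟨w, Finset.mem_insert_self _ _,
                fun h => hwD (h.symm ▸ hdD), Or.inl h1⟩
            · by_cases h2' : H.Adj u d
              · exact ⟨w, Finset.mem_insert_self _ _,
                  fun h => hwD (h.symm ▸ hdD), Or.inr ⟨u, huw.symm, h2'⟩⟩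
              · by_cases h3 : H.Adj y w
                · exact ⟨w, Finset.mem_insert_self _ _,
                    fun h => hwD (h.symm ▸ hdD), Or.inr ⟨y, h3.symm, hyd⟩⟩
                · by_cases h4 : H.Adj y u
                  · have hud : u ≠ d := by
                      rintro rfl
                      exact h1 huw.symm
                    exact ⟨u, huD', hud, Or.inr ⟨y, h4.symm, hyd⟩⟩
                  · exact (hfree d y v w u hyd.symm hvy.symm hwv.symm huw.symm
                      (hlon d hdD) (fun h => h1 h.symm) h3 h4
                      (fun h => hnadj h.symm)).elim
        · exact ⟨u', Finset.mem_insert_of_mem (Finset.mem_erase.mpr ⟨hu'v, hu'⟩), hu'd, h2⟩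
    · -- cardinality
      have hw' : w ∉ D.erase v := fun h => hwD (Finset.mem_of_mem_erase h)
      rw [Finset.card_insert_of_notMem hw', Finset.card_erase_of_mem hvD]
      omega
    · -- lonely set shrinks
      intro d hd
      obtain ⟨hd1, hd2⟩ := mem_Lset.mp hd
      have huD' : u ∈ insert w (D.erase v) :=
        Finset.mem_insert_of_mem (Finset.mem_erase.mpr ⟨huv, hu⟩)
      have hdw : d ≠ w := by rintro rfl; exact hd2 u huD' huw
      have hdD : d ∈ D := by
        rcases Finset.mem_insert.mp hd1 with rfl | h
        · exact absurd rfl hdw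
        · exact (Finset.mem_erase.mp h).2
      have hdv : d ≠ v := by
        rintro rfl
        rcases Finset.mem_insert.mp hd1 with h | h
        · exact hwv.ne h.symm
        · exact (Finset.mem_erase.mp h).1 rfl
      refine Finset.mem_erase.mpr ⟨hdv, mem_Lset.mpr ⟨hdD, ?_⟩⟩
      intro e he hadj
      by_cases hev : e = v
      · subst hev
        exact hlon d hdD hadj.symm
      · exact hd2 e (Finset.mem_insert_of_mem (Finset.mem_erase.mpr ⟨hev, he⟩)) hadj
  · -- some external private neighbour of v is not adjacent to w
    push_neg at hA
    obtain ⟨x, hxD, hvx, hxpriv, hxw, hwx⟩ := hA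
    have hA' : ∀ y, y ∉ D → H.Adj u y → (∀ e ∈ D, H.Adj e y → e = u) →
        (y = w ∨ H.Adj w y) := by
      intro y hyD huy hypriv
      by_contra hcon
      push_neg at hcon
      obtain ⟨hyw, hwy⟩ := hcon
      exact hfree x v w u y hvx.symm hwv.symm huw.symm huy
        (fun h => hwx h.symm)
        (fun h => huv (hxpriv u hu h.symm))
        (fun h => hnadj h.symm)
        (fun h => huv (hypriv v hvD h).symm)
        hwy
    have hvu : v ≠ u := fun h => huv h.symm
    have hvD' : v ∈ insert w (D.erase u) :=
      Finset.mem_insert_of_mem (Finset.mem_erase.mpr ⟨hvu, hvD⟩)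
    refine ⟨insert w (D.erase u), ⟨?_, ?_⟩, ?_, ?_⟩
    · -- dominating
      intro z hz
      have hzw : z ≠ w := by rintro rfl; exact hz (Finset.mem_insert_self z _)
      by_cases hzu : z = u
      · subst hzu
        exact ⟨w, Finset.mem_insert_self _ _, huw.symm⟩
      · have hzD : z ∉ D := fun h =>
          hz (Finset.mem_insert_of_mem (Finset.mem_erase.mpr ⟨hzu, h⟩))
        by_cases hpriv : ∀ e ∈ D, H.Adj e z → e = u
        · obtain ⟨e, he, hez⟩ := hD.1 z hzD
          have heu : e = u := hpriv e he hez
          subst heu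
          rcases hA' z hzD hez hpriv with h | h
          · exact absurd h hzw
          · exact ⟨w, Finset.mem_insert_self _ _, h⟩
        · push_neg at hpriv
          obtain ⟨e, he, hez, heu⟩ := hpriv
          exact ⟨e, Finset.mem_insert_of_mem (Finset.mem_erase.mpr ⟨heu, he⟩), hez⟩
    · -- semitotal condition
      intro d hd
      rcases Finset.mem_insert.mp hd with rfl | hd'
      · exact ⟨v, hvD', fun h => hwD (h ▸ hvD), Or.inl hwv.symm⟩
      · obtain ⟨hdu, hdD⟩ := Finset.mem_erase.mp hd'
        by_cases hdv : d = v
        · subst hdv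
          exact ⟨w, Finset.mem_insert_self _ _, fun h => H.irrefl (h ▸ hwv), Or.inl hwv⟩
        · obtain ⟨u', hu', hu'd, h2⟩ := hD.2 d hdD
          by_cases hu'u : u' = u
          · rw [hu'u] at h2
            have hwd : w ≠ d := fun h => hwD (h.symm ▸ hdD)
            rcases h2 with h | ⟨y, huy, hyd⟩
            · exact ⟨w, Finset.mem_insert_self _ _, hwd, Or.inr ⟨u, huw.symm, h⟩⟩
            · by_cases hud : H.Adj u d
              · exact ⟨w, Finset.mem_insert_self _ _, hwd, Or.inr ⟨u, huw.symm, hud⟩⟩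
              · by_cases h1 : H.Adj w d
                · exact ⟨w, Finset.mem_insert_self _ _, hwd, Or.inl h1⟩
                · by_cases h3 : H.Adj y w
                  · exact ⟨w, Finset.mem_insert_self _ _, hwd, Or.inr ⟨y, h3.symm, hyd⟩⟩
                  · by_cases h4 : H.Adj y v
                    · exact ⟨v, hvD', fun h => hdv h.symm, Or.inr ⟨y, h4.symm, hyd⟩⟩
                    · exact (hfree d y u w v hyd.symm huy.symm huw hwv
                        (fun h => hud h.symm) (fun h => h1 h.symm) h3 h4 hnadj).elim
          · exact ⟨u', Finset.mem_insert_of_mem (Finset.mem_erase.mpr ⟨hu'u, hu'⟩),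
              hu'd, h2⟩
    · -- cardinality
      have hw' : w ∉ D.erase u := fun h => hwD (Finset.mem_of_mem_erase h)
      rw [Finset.card_insert_of_notMem hw', Finset.card_erase_of_mem hu]
      omega
    · -- lonely set shrinks
      intro d hd
      obtain ⟨hd1, hd2⟩ := mem_Lset.mp hd
      have hdw : d ≠ w := by rintro rfl; exact hd2 v hvD' hwv.symm
      have hdv : d ≠ v := by
        rintro rfl
        exact hd2 w (Finset.mem_insert_self _ _) hwv
      have hdD : d ∈ D := by
        rcases Finset.mem_insert.mp hd1 with rfl | h
        · exact absurd rfl hdw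
        · exact (Finset.mem_erase.mp h).2
      have hnud : ¬H.Adj u d := by
        intro hud
        exact hfree x v w u d hvx.symm hwv.symm huw.symm hud
          (fun h => hwx h.symm)
          (fun h => huv (hxpriv u hu h.symm))
          (fun h => hnadj h.symm)
          (fun h => hlon d hdD h.symm)
          (hd2 w (Finset.mem_insert_self _ _))
      refine Finset.mem_erase.mpr ⟨hdv, mem_Lset.mpr ⟨hdD, ?_⟩⟩
      intro e he hadj
      by_cases heu : e = u
      · subst heu
        exact hnud hadj
      · exact hd2 e (Finset.mem_insert_of_mem (Finset.mem_erase.mpr ⟨heu, he⟩)) hadj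

lemma exists_total_of_semi {W : Type*} [DecidableEq W] {H : SimpleGraph W}
    (hfree : Freeish H) :
    ∀ n, ∀ D : Finset W, IsSemiTDSet H D → (Lset H D).card ≤ n →
      ∃ D', IsTotDomSet H D' ∧ D'.card ≤ D.card := by
  intro n
  induction n with
  | zero =>
    intro D hD hL
    refine ⟨D, ?_, le_rfl⟩
    intro z
    by_cases hz : z ∈ D
    · have hempty : Lset H D = ∅ := Finset.card_eq_zero.mp (le_antisymm hL (Nat.zero_le _))
      have hnot : z ∉ Lset H D := by simp [hempty]
      rw [mem_Lset] at hnot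
      push_neg at hnot
      obtain ⟨e, he, hadj⟩ := hnot hz
      exact ⟨e, he, hadj⟩
    · exact hD.1 z hz
  | succ n ih =>
    intro D hD hL
    by_cases h0 : (Lset H D).card = 0
    · exact ih D hD (by omega)
    · obtain ⟨v, hv⟩ := Finset.card_pos.mp (Nat.pos_of_ne_zero h0)
      obtain ⟨D', hD', hcard, hsub⟩ := step hfree hD hv
      have hL' : (Lset H D').card ≤ n := by
        have h1 : (Lset H D').card ≤ ((Lset H D).erase v).card := Finset.card_le_card hsub
        rw [Finset.card_erase_of_mem hv] at h1
        omega
      obtain ⟨D'', h1, h2⟩ := ih D' hD' hL'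
      exact ⟨D'', h1, h2.trans hcard⟩

theorem c5p5_free_min_semitotal_to_total {V : Type*} [Fintype V] [DecidableEq V]
    (G : SimpleGraph V)
    (hC5 : IsEmpty (cycleGraph 5 ↪g G)) (hP5 : IsEmpty (pathGraph 5 ↪g G))
    (S : Finset V)
    (hiso : ∀ v : (S : Set V), ∃ u, (SimpleGraph.induce (S : Set V) G).Adj v u) :
    (∀ D : Finset (S : Set V),
        IsSemiTDSet (SimpleGraph.induce (S : Set V) G) D →
        D.card = gammaT2 (SimpleGraph.induce (S : Set V) G) →
        ∃ D' : Finset (S : Set V),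
          IsTotDomSet (SimpleGraph.induce (S : Set V) G) D' ∧ D'.card ≤ D.card) ∧
    gammaT (SimpleGraph.induce (S : Set V) G) ≤
      gammaT2 (SimpleGraph.induce (S : Set V) G) := by
  classical
  set H := SimpleGraph.induce (S : Set V) G with hH
  have hfree : Freeish H := by
    apply freeish_of_isEmpty
    · exact ⟨fun f => hC5.elim ((SimpleGraph.Embedding.induce (S : Set V)).comp f)⟩
    · exact ⟨fun f => hP5.elim ((SimpleGraph.Embedding.induce (S : Set V)).comp f)⟩
  have part1 : ∀ D : Finset (S : Set V), IsSemiTDSet H D →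
      ∃ D' : Finset (S : Set V), IsTotDomSet H D' ∧ D'.card ≤ D.card :=
    fun D hD => exists_total_of_semi hfree (Lset H D).card D hD le_rfl
  have huniv : IsSemiTDSet H (Finset.univ : Finset (S : Set V)) := by
    constructor
    · intro v hv
      exact (hv (Finset.mem_univ v)).elim
    · intro v _
      obtain ⟨u, hu⟩ := hiso v
      exact ⟨u, Finset.mem_univ u, hu.ne', Or.inl hu.symm⟩
  refine ⟨fun D hD _ => part1 D hD, ?_⟩
  have hne : (gammaT2 H) ∈ {n | ∃ D : Finset (S : Set V), IsSemiTDSet H D ∧ D.card = n} :=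
    Nat.sInf_mem ⟨(Finset.univ : Finset (S : Set V)).card, Finset.univ, huniv, rfl⟩
  obtain ⟨D, hD, hDcard⟩ := hne
  obtain ⟨D', hD', hle⟩ := part1 D hD
  have h1 : gammaT H ≤ D'.card := Nat.sInf_le ⟨D', hD', rfl⟩
  omega
end
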